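/- Let A be a finite nonempty type and let x, y : A → ℝ. Then the softmax of x equals the softmax of y (i.e., for every a ∈ A, exp(x a) / ∑_{b∈A} exp(x b) = exp(y a) / ∑_{b∈A} exp(y b)) if and only if there exists a constant c ∈ ℝ such that x a = y a + c for all a ∈ A. -/

import Mathlib

/-- Softmax identifiability: two functions on a finite nonempty type have the same
softmax iff they differ by an additive constant. -/
theorem softmax_eq_iff_exists_const {A : Type*} [Fintype A] [Nonempty A] (x y : A → ℝ) :
    (∀ a : A, Real.exp (x a) / ∑ b : A, Real.exp (x b)
      = Real.exp (y a) / ∑ b : A, Real.exp (y b)) ↔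
    ∃ c : ℝ, ∀ a : A, x a = y a + c := by
  have hx : (0:ℝ) < ∑ b : A, Real.exp (x b) :=
    Finset.sum_pos (fun b _ => Real.exp_pos _) Finset.univ_nonempty
  have hy : (0:ℝ) < ∑ b : A, Real.exp (y b) :=
    Finset.sum_pos (fun b _ => Real.exp_pos _) Finset.univ_nonempty
  constructor
  · intro h
    refine ⟨Real.log ((∑ b : A, Real.exp (x b)) / ∑ b : A, Real.exp (y b)), fun a => ?_⟩
    have h1 : Real.exp (x a) = Real.exp (y a) *
        ((∑ b : A, Real.exp (x b)) / ∑ b : A, Real.exp (y b)) := by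
      field_simp at h ⊢
      linarith [h a]
    have h2 : x a = Real.log (Real.exp (x a)) := (Real.log_exp _).symm
    rw [h2, h1, Real.log_mul (Real.exp_pos _).ne' (div_pos hx hy).ne', Real.log_exp]
  · rintro ⟨c, hc⟩ a
    have hsum : (∑ b : A, Real.exp (x b)) = (∑ b : A, Real.exp (y b)) * Real.exp c := by
      rw [Finset.sum_mul]
      exact Finset.sum_congr rfl fun b _ => by rw [hc b, Real.exp_add]
    rw [hc a, Real.exp_add, hsum, mul_div_mul_right _ _ (Real.exp_pos c).ne']
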